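/- For integers n ≥ 0 and k ≥ 1, the number of cliques of size k in the 132-core D_n equals binomial(n+1, 2k). -/

import Mathlib

/-- Vertices of the cores: pairs (i,j) with 1 ≤ i ≤ j ≤ n. -/
def DVert (n : ℕ) (p : ℕ × ℕ) : Prop := 1 ≤ p.1 ∧ p.1 ≤ p.2 ∧ p.2 ≤ n

/-- One-directional (southeast) adjacency of the 132-core. -/
def DOne (n : ℕ) (p q : ℕ × ℕ) : Prop :=
  p.1 < q.1 ∧ q.1 ≤ p.2 ∧ p.2 < q.2 ∧ q.2 ≤ n

/-- Adjacency of the 132-core `D_n`. -/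
def DAdj (n : ℕ) (p q : ℕ × ℕ) : Prop := DOne n p q ∨ DOne n q p

/-- One-directional adjacency of the 123-core. -/
def UOne (n : ℕ) (p q : ℕ × ℕ) : Prop :=
  p.1 < q.1 ∧ p.2 < q.2 ∧ q.1 ≤ n ∧ q.2 ≤ n

/-- Adjacency of the 123-core `U_n`. -/
def UAdj (n : ℕ) (p q : ℕ × ℕ) : Prop := UOne n p q ∨ UOne n q p

namespace DcoreAux

def IsClique (n : ℕ) (S : Finset (ℕ × ℕ)) : Prop :=
  (∀ p ∈ S, DVert n p) ∧ ∀ p ∈ S, ∀ q ∈ S, p ≠ q → DAdj n p q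

def fmap (S : Finset (ℕ × ℕ)) : Finset ℕ :=
  S.image Prod.fst ∪ S.image (fun p => p.2 + 1)

variable {n : ℕ} {S T : Finset (ℕ × ℕ)} {p q : ℕ × ℕ}

lemma clique_order (hS : IsClique n S) (hp : p ∈ S) (hq : q ∈ S) (hne : p ≠ q) :
    (p.1 < q.1 ∧ p.2 < q.2) ∨ (q.1 < p.1 ∧ q.2 < p.2) := by
  rcases hS.2 p hp q hq hne with h | h
  · exact Or.inl ⟨h.1, h.2.2.1⟩
  · exact Or.inr ⟨h.1, h.2.2.1⟩

lemma clique_lt (hS : IsClique n S) (hp : p ∈ S) (hq : q ∈ S) : p.1 < q.2 + 1 := by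
  by_cases h : p = q
  · subst h
    exact Nat.lt_succ_of_le (hS.1 p hp).2.1
  · obtain ⟨a, b, c⟩ := hS.1 q hq
    rcases hS.2 p hp q hq h with ⟨h1, h2, h3, h4⟩ | ⟨h1, h2, h3, h4⟩ <;> omega

lemma fst_inj (hS : IsClique n S) (hp : p ∈ S) (hq : q ∈ S) (h : p.1 = q.1) : p = q := by
  by_contra hne
  rcases clique_order hS hp hq hne with h' | h' <;> omega

lemma snd_inj (hS : IsClique n S) (hp : p ∈ S) (hq : q ∈ S) (h : p.2 = q.2) : p = q := by
  by_contra hne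
  rcases clique_order hS hp hq hne with h' | h' <;> omega

lemma fst_mem_fmap (hp : p ∈ S) : p.1 ∈ fmap S := by
  simp only [fmap, Finset.mem_union, Finset.mem_image]
  exact Or.inl ⟨p, hp, rfl⟩

lemma snd_mem_fmap (hp : p ∈ S) : p.2 + 1 ∈ fmap S := by
  simp only [fmap, Finset.mem_union, Finset.mem_image]
  exact Or.inr ⟨p, hp, rfl⟩

lemma fmap_card (hS : IsClique n S) : (fmap S).card = 2 * S.card := by
  have h1 : (S.image Prod.fst).card = S.card :=
    Finset.card_image_of_injOn (fun p hp q hq h => fst_inj hS hp hq h)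
  have h2 : (S.image (fun p => p.2 + 1)).card = S.card :=
    Finset.card_image_of_injOn (fun p hp q hq h => snd_inj hS hp hq (by omega))
  have hd : Disjoint (S.image Prod.fst) (S.image (fun p => p.2 + 1)) := by
    rw [Finset.disjoint_left]
    rintro a ha hb
    simp only [Finset.mem_image] at ha hb
    obtain ⟨p, hp, rfl⟩ := ha
    obtain ⟨q, hq, hq2⟩ := hb
    have := clique_lt hS hp hq
    omega
  rw [fmap, Finset.card_union_of_disjoint hd, h1, h2]
  ring

lemma fmap_subset (hS : IsClique n S) : fmap S ⊆ Finset.Icc 1 (n + 1) := by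
  intro a ha
  simp only [fmap, Finset.mem_union, Finset.mem_image] at ha
  rw [Finset.mem_Icc]
  rcases ha with ⟨p, hp, rfl⟩ | ⟨p, hp, rfl⟩ <;>
    · obtain ⟨a, b, c⟩ := hS.1 p hp; omega

lemma mem_fmap_erase (hS : IsClique n S) (hp : p ∈ S) {a : ℕ} :
    a ∈ fmap (S.erase p) ↔ a ∈ fmap S ∧ a ≠ p.1 ∧ a ≠ p.2 + 1 := by
  simp only [fmap, Finset.mem_union, Finset.mem_image, Finset.mem_erase]
  constructor
  · rintro (⟨r, ⟨hrp, hr⟩, rfl⟩ | ⟨r, ⟨hrp, hr⟩, rfl⟩)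
    · refine ⟨Or.inl ⟨r, hr, rfl⟩, ?_, ?_⟩
      · exact fun h => hrp (fst_inj hS hr hp h)
      · have := clique_lt hS hr hp
        omega
    · refine ⟨Or.inr ⟨r, hr, rfl⟩, ?_, ?_⟩
      · have := clique_lt hS hp hr
        omega
      · intro h
        exact hrp (snd_inj hS hr hp (by omega))
  · rintro ⟨⟨r, hr, rfl⟩ | ⟨r, hr, rfl⟩, h1, h2⟩
    · exact Or.inl ⟨r, ⟨fun he => h1 (by rw [he]), hr⟩, rfl⟩
    · exact Or.inr ⟨r, ⟨fun he => h2 (by rw [he]), hr⟩, rfl⟩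

lemma clique_mono (hsub : T ⊆ S) (hS : IsClique n S) : IsClique n T :=
  ⟨fun p hp => hS.1 p (hsub hp), fun p hp q hq => hS.2 p (hsub hp) q (hsub hq)⟩

lemma filter_lt_card_inj {A : Finset ℕ} {a b : ℕ} (ha : a ∈ A) (hb : b ∈ A)
    (h : (A.filter (· < a)).card = (A.filter (· < b)).card) : a = b := by
  have key : ∀ a b, a ∈ A → b ∈ A → a < b →
      (A.filter (· < a)).card < (A.filter (· < b)).card := by
    intro a b ha hb hab
    apply Finset.card_lt_card
    rw [Finset.ssubset_iff_of_subset]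
    · exact ⟨a, by simp [ha, hab], by simp⟩
    · intro x hx
      simp only [Finset.mem_filter] at *
      exact ⟨hx.1, lt_trans hx.2 hab⟩
  rcases lt_trichotomy a b with h' | h' | h'
  · have := key a b ha hb h'; omega
  · exact h'
  · have := key b a hb ha h'; omega

lemma exists_min (hS : IsClique n S) (hne : S.Nonempty) :
    ∃ p ∈ S, (∀ a ∈ fmap S, p.1 ≤ a) ∧
      ((fmap S).filter (· < p.2 + 1)).card = S.card := by
  obtain ⟨p, hp, hmin⟩ := S.exists_min_image Prod.fst hne
  refine ⟨p, hp, ?_, ?_⟩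
  · intro a ha
    simp only [fmap, Finset.mem_union, Finset.mem_image] at ha
    rcases ha with ⟨r, hr, rfl⟩ | ⟨r, hr, rfl⟩
    · exact hmin r hr
    · exact le_of_lt (clique_lt hS hp hr)
  · have hsnd : ∀ r ∈ S, r ≠ p → p.2 < r.2 := by
      intro r hr hrp
      have h1 : p.1 ≤ r.1 := hmin r hr
      have h2 : p.1 ≠ r.1 := fun h => hrp (fst_inj hS hr hp h.symm)
      rcases clique_order hS hp hr (fun h => hrp h.symm) with h' | h' <;> omega
    have : (fmap S).filter (· < p.2 + 1) = S.image Prod.fst := by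
      ext a
      simp only [Finset.mem_filter, fmap, Finset.mem_union, Finset.mem_image]
      constructor
      · rintro ⟨⟨r, hr, rfl⟩ | ⟨r, hr, rfl⟩, hlt⟩
        · exact ⟨r, hr, rfl⟩
        · exfalso
          by_cases hrp : r = p
          · subst hrp; omega
          · have := hsnd r hr hrp; omega
      · rintro ⟨r, hr, rfl⟩
        exact ⟨Or.inl ⟨r, hr, rfl⟩, clique_lt hS hr hp⟩
    rw [this]
    exact Finset.card_image_of_injOn (fun p hp q hq h => fst_inj hS hp hq h)

lemma fmap_inj : ∀ k S T, IsClique n S → IsClique n T → S.card = k → T.card = k →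
    fmap S = fmap T → S = T := by
  intro k
  induction k with
  | zero =>
    intro S T _ _ hSc hTc _
    rw [Finset.card_eq_zero.1 hSc, Finset.card_eq_zero.1 hTc]
  | succ k ih =>
    intro S T hS hT hSc hTc hf
    have hne : S.Nonempty := Finset.card_pos.1 (by omega)
    have hneT : T.Nonempty := Finset.card_pos.1 (by omega)
    obtain ⟨p, hp, hmin, hcnt⟩ := exists_min hS hne
    obtain ⟨q, hq, hminT, hcntT⟩ := exists_min hT hneT
    have hpq : p = q := by
      have h1 : p.1 = q.1 :=
        le_antisymm (hmin _ (by rw [hf]; exact fst_mem_fmap hq))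
          (by rw [← hf] at hminT; exact hminT _ (fst_mem_fmap hp))
      have h2 : p.2 + 1 = q.2 + 1 := by
        apply filter_lt_card_inj (A := fmap S) (snd_mem_fmap hp)
          (by rw [hf]; exact snd_mem_fmap hq)
        rw [hcnt, hSc]
        rw [hf] at *
        rw [hcntT, hTc]
      exact Prod.ext h1 (by omega)
    subst hpq
    have hS' : IsClique n (S.erase p) := clique_mono (Finset.erase_subset _ _) hS
    have hT' : IsClique n (T.erase p) := clique_mono (Finset.erase_subset _ _) hT
    have hf' : fmap (S.erase p) = fmap (T.erase p) := by
      ext a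
      rw [mem_fmap_erase hS hp, mem_fmap_erase hT hq, hf]
    have hrec := ih (S.erase p) (T.erase p) hS' hT'
      (by rw [Finset.card_erase_of_mem hp]; omega)
      (by rw [Finset.card_erase_of_mem hq]; omega) hf'
    calc S = insert p (S.erase p) := (Finset.insert_erase hp).symm
    _ = insert p (T.erase p) := by rw [hrec]
    _ = T := Finset.insert_erase hq

lemma exists_clique {A : Finset ℕ} {k : ℕ} (hA : A ⊆ Finset.Icc 1 (n + 1))
    (hcard : A.card = 2 * k) :
    ∃ S, IsClique n S ∧ S.card = k ∧ fmap S = A := by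
  let e := A.orderIsoOfFin hcard
  have hm : ∀ i : Fin (2 * k), (e i : ℕ) ∈ A := fun i => (e i).2
  have hb : ∀ i : Fin (2 * k), 1 ≤ (e i : ℕ) ∧ (e i : ℕ) ≤ n + 1 := by
    intro i
    have := hA (hm i)
    rw [Finset.mem_Icc] at this
    exact this
  have hmono : ∀ i j : Fin (2 * k), i < j → (e i : ℕ) < (e j : ℕ) := by
    intro i j hij
    exact e.strictMono hij
  set F : Fin k → ℕ × ℕ := fun t =>
    ((e ⟨t.1, by omega⟩ : ℕ), (e ⟨k + t.1, by omega⟩ : ℕ) - 1) with hF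
  have hFone : ∀ t s : Fin k, t.1 < s.1 → DOne n (F t) (F s) := by
    intro t s hts
    have htk := t.isLt
    have hsk := s.isLt
    have h1 : (e ⟨t.1, by omega⟩ : ℕ) < (e ⟨s.1, by omega⟩ : ℕ) :=
      hmono _ _ (Fin.mk_lt_mk.2 (by omega))
    have h2 : (e ⟨s.1, by omega⟩ : ℕ) < (e ⟨k + t.1, by omega⟩ : ℕ) :=
      hmono _ _ (Fin.mk_lt_mk.2 (by omega))
    have h3 : (e ⟨k + t.1, by omega⟩ : ℕ) < (e ⟨k + s.1, by omega⟩ : ℕ) :=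
      hmono _ _ (Fin.mk_lt_mk.2 (by omega))
    have hb1 := hb ⟨k + t.1, by omega⟩
    have hb2 := hb ⟨k + s.1, by omega⟩
    refine ⟨h1, ?_, ?_, ?_⟩ <;> dsimp only [F] <;> omega
  refine ⟨(Finset.univ : Finset (Fin k)).image F, ⟨?_, ?_⟩, ?_, ?_⟩
  · rintro p hp
    simp only [Finset.mem_image, Finset.mem_univ, true_and] at hp
    obtain ⟨t, rfl⟩ := hp
    have htk := t.isLt
    have h1 : (e ⟨t.1, by omega⟩ : ℕ) < (e ⟨k + t.1, by omega⟩ : ℕ) :=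
      hmono _ _ (Fin.mk_lt_mk.2 (by omega))
    have hb1 := hb ⟨t.1, by omega⟩
    have hb2 := hb ⟨k + t.1, by omega⟩
    refine ⟨?_, ?_, ?_⟩ <;> dsimp only [F] <;> omega
  · rintro p hp q hq hne
    simp only [Finset.mem_image, Finset.mem_univ, true_and] at hp hq
    obtain ⟨t, rfl⟩ := hp
    obtain ⟨s, rfl⟩ := hq
    rcases lt_trichotomy t.1 s.1 with h | h | h
    · exact Or.inl (hFone t s h)
    · exact absurd (congrArg F (Fin.ext h)) hne
    · exact Or.inr (hFone s t h)
  · rw [Finset.card_image_of_injOn, Finset.card_univ, Fintype.card_fin]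
    intro t _ s _ h
    by_contra hne
    have hne' : t.1 ≠ s.1 := fun h' => hne (Fin.ext h')
    rcases lt_or_gt_of_ne hne' with h' | h'
    · have := (hFone t s h').1
      rw [h] at this
      exact lt_irrefl _ this
    · have := (hFone s t h').1
      rw [h] at this
      exact lt_irrefl _ this
  · ext a
    simp only [fmap, Finset.mem_union, Finset.mem_image, Finset.mem_univ, true_and,
      exists_exists_eq_and]
    constructor
    · rintro (⟨t, ht⟩ | ⟨t, ht⟩)
      · rw [← ht]
        exact hm _
      · have hb1 := hb ⟨k + t.1, by omega⟩
        have : a = (e ⟨k + t.1, by omega⟩ : ℕ) := by dsimp only [F] at ht; omega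
        rw [this]
        exact hm _
    · intro ha
      set i := e.symm ⟨a, ha⟩ with hi
      have hei : (e i : ℕ) = a := by rw [hi, OrderIso.apply_symm_apply]
      have hilt := i.isLt
      by_cases hik : i.1 < k
      · left
        refine ⟨⟨i.1, hik⟩, ?_⟩
        dsimp only [F]
        rw [show (⟨(⟨i.1, hik⟩ : Fin k).1, by omega⟩ : Fin (2 * k)) = i from Fin.ext rfl]
        exact hei
      · right
        refine ⟨⟨i.1 - k, by omega⟩, ?_⟩
        dsimp only [F]
        rw [show (⟨k + (⟨i.1 - k, by omega⟩ : Fin k).1, by omega⟩ : Fin (2 * k)) = i from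
          Fin.ext (show k + (i.1 - k) = i.1 by omega)]
        have h1 := hA ha
        rw [Finset.mem_Icc] at h1
        omega

end DcoreAux

open DcoreAux in
/-- The number of cliques of size `k ≥ 1` in the 132-core `D_n` is
`binomial(n+1, 2k)`. -/
theorem dcore_clique_count (n k : ℕ) (hk : 1 ≤ k) :
    Nat.card {S : Finset (ℕ × ℕ) // S.card = k ∧ (∀ p ∈ S, DVert n p) ∧
        ∀ p ∈ S, ∀ q ∈ S, p ≠ q → DAdj n p q} =
      (n + 1).choose (2 * k) := by
  have hinj : Set.InjOn fmap {S : Finset (ℕ × ℕ) | S.card = k ∧ IsClique n S} :=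
    fun S hS T hT h => fmap_inj k S T hS.2 hT.2 hS.1 hT.1 h
  have himg : fmap '' {S : Finset (ℕ × ℕ) | S.card = k ∧ IsClique n S} =
      ↑((Finset.Icc 1 (n + 1)).powersetCard (2 * k)) := by
    ext A
    simp only [Set.mem_image, Set.mem_setOf_eq, Finset.mem_coe, Finset.mem_powersetCard]
    constructor
    · rintro ⟨S, ⟨hc, hS⟩, rfl⟩
      exact ⟨fmap_subset hS, by rw [fmap_card hS, hc]⟩
    · rintro ⟨hsub, hcard⟩
      obtain ⟨S, hS, hc, hf⟩ := exists_clique hsub hcard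
      exact ⟨S, ⟨hc, hS⟩, hf⟩
  calc Nat.card {S : Finset (ℕ × ℕ) // S.card = k ∧ (∀ p ∈ S, DVert n p) ∧
        ∀ p ∈ S, ∀ q ∈ S, p ≠ q → DAdj n p q}
      = Set.ncard {S : Finset (ℕ × ℕ) | S.card = k ∧ IsClique n S} :=
        Nat.card_coe_set_eq _
    _ = Set.ncard (fmap '' {S : Finset (ℕ × ℕ) | S.card = k ∧ IsClique n S}) :=
        (Set.ncard_image_of_injOn hinj).symm
    _ = ((Finset.Icc 1 (n + 1)).powersetCard (2 * k)).card := by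
        rw [himg]; exact Set.ncard_coe_finset _
    _ = (n + 1).choose (2 * k) := by
        rw [Finset.card_powersetCard, Nat.card_Icc]
        norm_num
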